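/- For every natural number k, the probability of measuring a rewarded action sequence after k Grover iterations equals ∑_{i∈W} (((R·O)^k)·ψ)(i)² = sin²((2k+1)·arcsin(√Q)), i.e., it equals the amplified winning probability G(Q,k) = sin²((2k+1)·arcsin(√Q)). -/

import Mathlib

open Real Matrix Finset

/-- The probability of measuring a rewarded action sequence after `k` Grover
iterations equals the amplified winning probability
`G(Q,k) = sin² ((2k+1)·arcsin √Q)`. -/
theorem grover_pow_winning_probability (n : ℕ) (pr : Fin n → ℝ)
    (hpr : ∀ i, 0 ≤ pr i) (hsum : ∑ i, pr i = 1)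
    (W : Finset (Fin n)) (Q : ℝ) (hQ : Q = ∑ i ∈ W, pr i)
    (hQpos : 0 < Q) (hQlt : Q < 1)
    (ψ : Fin n → ℝ) (hψ : ∀ i, ψ i = Real.sqrt (pr i))
    (O : Matrix (Fin n) (Fin n) ℝ)
    (hO : O = Matrix.diagonal (fun i => if i ∈ W then (-1 : ℝ) else 1))
    (R : Matrix (Fin n) (Fin n) ℝ) (hR : R = 2 • Matrix.vecMulVec ψ ψ - 1) :
    ∀ k : ℕ,
      ∑ i ∈ W, (((R * O) ^ k).mulVec ψ i) ^ 2 =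
        Real.sin ((2 * k + 1) * Real.arcsin (Real.sqrt Q)) ^ 2 := by
  have hQ1 : Real.sqrt Q ≤ 1 := by
    rw [show (1:ℝ) = Real.sqrt 1 by simp]
    exact Real.sqrt_le_sqrt hQlt.le
  set θ := Real.arcsin (Real.sqrt Q) with hθdef
  have hsθ : Real.sin θ = Real.sqrt Q :=
    Real.sin_arcsin (le_trans (by norm_num) (Real.sqrt_nonneg Q)) hQ1
  have hcθ : Real.cos θ = Real.sqrt (1 - Q) := by
    rw [hθdef, Real.cos_arcsin, Real.sq_sqrt hQpos.le]
  have hspos : 0 < Real.sin θ := by rw [hsθ]; exact Real.sqrt_pos.mpr hQpos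
  have hcpos : 0 < Real.cos θ := by
    rw [hcθ]; exact Real.sqrt_pos.mpr (by linarith)
  have hs2 : Real.sin θ ^ 2 = Q := by rw [hsθ, Real.sq_sqrt hQpos.le]
  have hc2 : Real.cos θ ^ 2 = 1 - Q := by
    rw [hcθ, Real.sq_sqrt (by linarith)]
  have hψsq : ∀ i, ψ i * ψ i = pr i := fun i => by
    rw [hψ]; exact Real.mul_self_sqrt (hpr i)
  have hWc : ∑ i ∈ Wᶜ, pr i = 1 - Q := by
    have h := Finset.sum_add_sum_compl W pr
    rw [hsum, ← hQ] at h
    linarith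
  have pyth : Real.sin θ ^ 2 + Real.cos θ ^ 2 = 1 := Real.sin_sq_add_cos_sq θ
  have key : ∀ k : ℕ, ((R * O) ^ k).mulVec ψ =
      fun i => ψ i * (if i ∈ W then Real.sin ((2*(k:ℝ)+1)*θ) / Real.sin θ
                       else Real.cos ((2*(k:ℝ)+1)*θ) / Real.cos θ) := by
    intro k
    induction k with
    | zero =>
      funext i
      simp only [pow_zero, Matrix.one_mulVec, Nat.cast_zero]
      rw [show (2*(0:ℝ)+1)*θ = θ by ring]
      split
      · field_simp
      · field_simp
    | succ k ih =>
      set p := Real.sin ((2*(k:ℝ)+1)*θ) with hp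
      set q := Real.cos ((2*(k:ℝ)+1)*θ) with hq
      set a := p / Real.sin θ with ha
      set b := q / Real.cos θ with hb
      rw [pow_succ', ← Matrix.mulVec_mulVec, ← Matrix.mulVec_mulVec, ih]
      have hOv : O *ᵥ (fun i => ψ i * (if i ∈ W then a else b)) =
          fun i => ψ i * (if i ∈ W then -a else b) := by
        funext i
        rw [hO, Matrix.mulVec_diagonal]
        by_cases hi : i ∈ W <;> simp [hi]
      rw [hOv]
      have hvm : ∀ w : Fin n → ℝ, (Matrix.vecMulVec ψ ψ) *ᵥ w
          = fun i => ψ i * (∑ j, ψ j * w j) := by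
        intro w; funext i
        simp [Matrix.mulVec, Matrix.vecMulVec_apply, dotProduct, Finset.mul_sum,
          mul_assoc]
      have hS : ∑ j, ψ j * (ψ j * (if j ∈ W then -a else b))
          = -Q * a + (1-Q) * b := by
        have h1 : ∀ j, ψ j * (ψ j * (if j ∈ W then -a else b))
            = pr j * (if j ∈ W then -a else b) := by
          intro j; rw [← hψsq j]; ring
        simp_rw [h1]
        rw [← Finset.sum_add_sum_compl W]
        have e1 : ∑ j ∈ W, pr j * (if j ∈ W then -a else b)
            = (∑ j ∈ W, pr j) * (-a) := by
          rw [Finset.sum_mul]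
          exact Finset.sum_congr rfl fun j hj => by rw [if_pos hj]
        have e2 : ∑ j ∈ Wᶜ, pr j * (if j ∈ W then -a else b)
            = (∑ j ∈ Wᶜ, pr j) * b := by
          rw [Finset.sum_mul]
          exact Finset.sum_congr rfl fun j hj => by
            rw [if_neg (Finset.mem_compl.mp hj)]
        rw [e1, e2, ← hQ, hWc]
        ring
      have hφ : (2*(((k:ℕ)+1 : ℕ):ℝ)+1)*θ = ((2*(k:ℝ)+1)*θ + θ) + θ := by
        push_cast; ring
      have hsΦ : Real.sin ((2*(((k:ℕ)+1 : ℕ):ℝ)+1)*θ)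
          = (p * Real.cos θ + q * Real.sin θ) * Real.cos θ
            + (q * Real.cos θ - p * Real.sin θ) * Real.sin θ := by
        rw [hφ, Real.sin_add, Real.sin_add, Real.cos_add]
      have hcΦ : Real.cos ((2*(((k:ℕ)+1 : ℕ):ℝ)+1)*θ)
          = (q * Real.cos θ - p * Real.sin θ) * Real.cos θ
            - (p * Real.cos θ + q * Real.sin θ) * Real.sin θ := by
        rw [hφ, Real.cos_add, Real.sin_add, Real.cos_add]
      have trigW : 2 * (-Q * a + (1-Q) * b) + a
          = Real.sin ((2*(((k:ℕ)+1 : ℕ):ℝ)+1)*θ) / Real.sin θ := by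
        rw [hsΦ, ha, hb, ← hs2]
        field_simp
        linear_combination (-(p * Real.cos θ + 2 * Real.sin θ * q)) * pyth
      have trigC : 2 * (-Q * a + (1-Q) * b) - b
          = Real.cos ((2*(((k:ℕ)+1 : ℕ):ℝ)+1)*θ) / Real.cos θ := by
        rw [hcΦ, ha, hb, ← hs2]
        field_simp
        linear_combination (-q) * pyth
      funext i
      rw [hR, Matrix.sub_mulVec, Matrix.one_mulVec, two_smul, Matrix.add_mulVec,
        hvm]
      simp only [Pi.sub_apply, Pi.add_apply, hS]
      by_cases hi : i ∈ W
      · simp only [hi, if_true]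
        rw [← trigW]; ring
      · simp only [hi, if_false]
        rw [← trigC]; ring
  intro k
  rw [key k]
  have h1 : ∀ i ∈ W, (ψ i * (if i ∈ W then Real.sin ((2*(k:ℝ)+1)*θ) / Real.sin θ
      else Real.cos ((2*(k:ℝ)+1)*θ) / Real.cos θ)) ^ 2
      = pr i * (Real.sin ((2*(k:ℝ)+1)*θ) ^ 2 / Q) := by
    intro i hi
    rw [if_pos hi, ← hs2]
    field_simp
    nlinarith [hψsq i]
  rw [Finset.sum_congr rfl h1, ← Finset.sum_mul, ← hQ]
  field_simp
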